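/- Let P, Q be orthogonal projections on a complex Hilbert space 𝔥 with ranges in generic position. Define φ: 𝔮 → 𝔮^⊥ by gra φ = {(Qp, Q^⊥p) : p ∈ 𝔭} and ρ: 𝔮 → 𝔮^⊥ by gra ρ = {(Qp^⊥, −Q^⊥p^⊥) : p^⊥ ∈ 𝔭^⊥}. Then ρ^{-1} = φ*, i.e. the adjoint of φ equals the inverse of ρ. -/

import Mathlib

open scoped ComplexInnerProductSpace

/-- Lemma 4.1 (adjoint part): with `𝔭, 𝔮` in generic position, `φ` with graph
`{(Qp, Q⊥p) : p ∈ 𝔭}` and `ρ` with graph `{(Qp⊥, −Q⊥p⊥) : p⊥ ∈ 𝔭ᗮ}`, one has `ρ⁻¹ = φ*`: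
the graph of the adjoint of `φ` equals the graph of the inverse of `ρ`. -/
theorem rho_inverse_eq_phi_adjoint
    {E : Type*} [NormedAddCommGroup E] [InnerProductSpace ℂ E] [CompleteSpace E]
    (P : E →L[ℂ] E) (hP_proj : P ∘L P = P) (hP_sa : IsSelfAdjoint P)
    (Q : E →L[ℂ] E) (hQ_proj : Q ∘L Q = Q) (hQ_sa : IsSelfAdjoint Q)
    (hgen1 : LinearMap.range (P : E →ₗ[ℂ] E) ⊓ LinearMap.range (Q : E →ₗ[ℂ] E) = ⊥)
    (hgen2 : LinearMap.range (P : E →ₗ[ℂ] E) ⊓ (LinearMap.range (Q : E →ₗ[ℂ] E))ᗮ = ⊥)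
    (hgen3 : (LinearMap.range (P : E →ₗ[ℂ] E))ᗮ ⊓ LinearMap.range (Q : E →ₗ[ℂ] E) = ⊥)
    (hgen4 : (LinearMap.range (P : E →ₗ[ℂ] E))ᗮ ⊓ (LinearMap.range (Q : E →ₗ[ℂ] E))ᗮ = ⊥) :
    -- graph of the adjoint `φ*` of `φ` (where `gra φ = {(Qp, Q⊥p) : p ∈ 𝔭}`) …
    {z : E × E | z.1 ∈ (LinearMap.range (Q : E →ₗ[ℂ] E))ᗮ ∧ z.2 ∈ LinearMap.range (Q : E →ₗ[ℂ] E) ∧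
        ∀ p ∈ LinearMap.range (P : E →ₗ[ℂ] E), ⟪(1 - Q) p, z.1⟫ = ⟪Q p, z.2⟫}
    -- … equals the graph of `ρ⁻¹` (where `gra ρ = {(Qp⊥, −Q⊥p⊥) : p⊥ ∈ 𝔭ᗮ}`)
    = {z : E × E | ∃ p' ∈ (LinearMap.range (P : E →ₗ[ℂ] E))ᗮ, z = (-((1 - Q) p'), Q p')} := by
  have hQsym : ∀ x y : E, ⟪Q x, y⟫ = ⟪x, Q y⟫ := fun x y =>
    (ContinuousLinearMap.isSelfAdjoint_iff_isSymmetric.mp hQ_sa) x y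
  have hQidem : ∀ x, Q (Q x) = Q x := fun x => congrFun (congrArg DFunLike.coe hQ_proj) x
  have hmemQ : ∀ x : E, x ∈ LinearMap.range (Q : E →ₗ[ℂ] E) ↔ Q x = x := by
    intro x; constructor
    · rintro ⟨y, rfl⟩; exact hQidem y
    · intro h; exact ⟨x, h⟩
  have hmemQperp : ∀ x : E, x ∈ (LinearMap.range (Q : E →ₗ[ℂ] E))ᗮ ↔ Q x = 0 := by
    intro x; constructor
    · intro h
      have h2 : ∀ y : E, ⟪y, Q x⟫ = 0 := fun y => by
        rw [← hQsym]; exact h (Q y) ⟨y, rfl⟩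
      exact inner_self_eq_zero.mp (h2 (Q x))
    · rintro h u ⟨y, rfl⟩
      rw [ContinuousLinearMap.coe_coe, hQsym, h, inner_zero_right]
  ext z
  obtain ⟨z1, z2⟩ := z
  simp only [Set.mem_setOf_eq]
  constructor
  · rintro ⟨h1, h2, h3⟩
    have hQz1 : Q z1 = 0 := (hmemQperp z1).mp h1
    have hQz2 : Q z2 = z2 := (hmemQ z2).mp h2
    refine ⟨z2 - z1, ?_, ?_⟩
    · rintro u ⟨x, rfl⟩
      have key := h3 (P x) ⟨x, rfl⟩
      have e1 : ⟪P x, z1⟫ = ⟪(1 - Q) (P x), z1⟫ := by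
        simp only [ContinuousLinearMap.sub_apply, ContinuousLinearMap.one_apply,
          inner_sub_left, hQsym, hQz1, inner_zero_right, sub_zero]
      have e2 : ⟪P x, z2⟫ = ⟪Q (P x), z2⟫ := by
        rw [hQsym, hQz2]
      rw [ContinuousLinearMap.coe_coe, inner_sub_right, e1, e2, key, sub_self]
    · have hz1 : -((1 - Q) (z2 - z1)) = z1 := by
        simp only [ContinuousLinearMap.sub_apply, ContinuousLinearMap.one_apply, map_sub,
          hQz1, hQz2, sub_zero]
        abel
      have hz2 : Q (z2 - z1) = z2 := by
        rw [map_sub, hQz1, hQz2, sub_zero]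
      rw [hz1, hz2]
  · rintro ⟨p', hp', hz⟩
    have hz1 : z1 = -((1 - Q) p') := congrArg Prod.fst hz
    have hz2 : z2 = Q p' := congrArg Prod.snd hz
    subst hz1 hz2
    refine ⟨?_, ⟨p', rfl⟩, ?_⟩
    · rw [hmemQperp]
      simp [map_sub, hQidem]
    · rintro u ⟨x, rfl⟩
      have h0 : ⟪P x, p'⟫ = 0 := hp' (P x) ⟨x, rfl⟩
      have eL : ⟪(1 - Q) (P x), -((1 - Q) p')⟫ = -⟪P x, p'⟫ + ⟪P x, Q p'⟫ := by
        simp only [ContinuousLinearMap.sub_apply, ContinuousLinearMap.one_apply,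
          inner_neg_right, inner_sub_left, inner_sub_right, hQsym, hQidem]
        ring
      have eR : ⟪Q (P x), Q p'⟫ = ⟪P x, Q p'⟫ := by
        rw [hQsym, hQidem]
      rw [ContinuousLinearMap.coe_coe, eL, eR, h0, neg_zero, zero_add]
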